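/- Let Ψ_x ∈ Q(n,m) with coefficient matrices R_0,…,R_m, and let Ψ ∈ Q(n,m) with coefficient matrices Q_0,…,Q_m. If for every θ ∈ ℝ both Ψ(θ) and Ψ_x(θ) − Ψ(θ) are positive semidefinite, then for each k = 0, 1, …, m the operator norm of Q_k (as a complex matrix) is at most the supremum over θ ∈ [-π,π] of the operator norm of Ψ_x(θ). -/

import Mathlib

open Matrix Complex Real
open scoped ComplexOrder

/-- The matrix pseudo-polynomial `θ ↦ Q₀ + ∑_{k=1}^m (e^{-ikθ} • Q_k + e^{ikθ} • Q_kᵀ)`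
with real coefficient matrices `Q 0, …, Q m`. -/
noncomputable def psiOf (n m : ℕ) (Q : Fin (m + 1) → Matrix (Fin n) (Fin n) ℝ) :
    ℝ → Matrix (Fin n) (Fin n) ℂ := fun θ =>
  (Q 0).map (Complex.ofReal) +
    ∑ k : Fin m,
      (Complex.exp (-(Complex.I * ((k.1 : ℂ) + 1) * (θ : ℂ))) •
          (Q k.succ).map Complex.ofReal +
        Complex.exp (Complex.I * ((k.1 : ℂ) + 1) * (θ : ℂ)) •
          ((Q k.succ)ᵀ).map Complex.ofReal)

/-- Membership in the class `Q(n,m)` of matrix pseudo-polynomials with real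
coefficients and symmetric constant coefficient. -/
def memQ (n m : ℕ) (Ψ : ℝ → Matrix (Fin n) (Fin n) ℂ) : Prop :=
  ∃ Q : Fin (m + 1) → Matrix (Fin n) (Fin n) ℝ,
    (Q 0).IsSymm ∧ ∀ θ : ℝ, Ψ θ = psiOf n m Q θ

/-- The normalized trace integral `T(Ψ) = (1/2π) ∫_{-π}^{π} Re tr Ψ(θ) dθ`. -/
noncomputable def traceInt (n : ℕ) (Ψ : ℝ → Matrix (Fin n) (Fin n) ℂ) : ℝ :=
  (1 / (2 * Real.pi)) * ∫ θ in (-Real.pi)..Real.pi, (Matrix.trace (Ψ θ)).re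

/-- The ℓ²→ℓ² operator norm (largest singular value) of a complex matrix. -/
noncomputable def l2OpNorm (n : ℕ) (A : Matrix (Fin n) (Fin n) ℂ) : ℝ :=
  ‖Matrix.toEuclideanCLM (𝕜 := ℂ) A‖

lemma integral_exp_int (c : ℤ) :
    (∫ θ : ℝ in (-Real.pi)..Real.pi, Complex.exp (Complex.I * (c : ℂ) * (θ : ℂ))) =
      if c = 0 then (2 * Real.pi : ℂ) else 0 := by
  rcases eq_or_ne c 0 with hc | hc
  · simp only [hc, Int.cast_zero, mul_zero, zero_mul, Complex.exp_zero, if_pos rfl]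
    rw [intervalIntegral.integral_const, Complex.real_smul]
    push_cast
    ring
  · have h : (Complex.I * (c : ℂ)) ≠ 0 := by
      simp [Complex.I_ne_zero, Int.cast_ne_zero.mpr hc]
    rw [if_neg hc]
    have := integral_exp_mul_complex (a := -Real.pi) (b := Real.pi) h
    simp only [mul_assoc] at this ⊢
    rw [this]
    have hper : Complex.exp (Complex.I * ((c : ℂ) * (Real.pi : ℂ))) =
        Complex.exp (Complex.I * ((c : ℂ) * ((-Real.pi : ℝ) : ℂ))) := by
      have he : Complex.I * ((c : ℂ) * (Real.pi : ℂ)) =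
          Complex.I * ((c : ℂ) * ((-Real.pi : ℝ) : ℂ)) + (c : ℂ) * (2 * Real.pi * Complex.I) := by
        push_cast; ring
      rw [he, Complex.exp_add, Complex.exp_int_mul_two_pi_mul_I, mul_one]
    rw [hper, sub_self, zero_div]

lemma integral_exp_int_mul (c : ℤ) (z : ℂ) :
    (∫ θ : ℝ in (-Real.pi)..Real.pi, Complex.exp (Complex.I * (c : ℂ) * (θ : ℂ)) * z) =
      (if c = 0 then (2 * Real.pi : ℂ) else 0) * z := by
  rw [intervalIntegral.integral_mul_const, integral_exp_int]

lemma expcont (c : ℤ) (z : ℂ) :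
    IntervalIntegrable (fun θ : ℝ => Complex.exp (Complex.I * (c : ℂ) * (θ : ℂ)) * z)
      MeasureTheory.volume (-Real.pi) Real.pi := by
  apply Continuous.intervalIntegrable
  fun_prop

set_option maxHeartbeats 2000000 in
lemma fourier_pick (m : ℕ) (a : Fin (m + 1) → ℂ) (b : Fin m → ℂ) (j : Fin (m + 1)) :
    (∫ θ : ℝ in (-Real.pi)..Real.pi,
        Complex.exp (Complex.I * (j.1 : ℂ) * (θ : ℂ)) *
          (a 0 + ∑ k : Fin m,
            (Complex.exp (-(Complex.I * ((k.1 : ℂ) + 1) * (θ : ℂ))) * a k.succ +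
              Complex.exp (Complex.I * ((k.1 : ℂ) + 1) * (θ : ℂ)) * b k))) =
      (2 * Real.pi : ℂ) * a j := by
  have hrw : ∀ θ : ℝ,
      Complex.exp (Complex.I * (j.1 : ℂ) * (θ : ℂ)) *
          (a 0 + ∑ k : Fin m,
            (Complex.exp (-(Complex.I * ((k.1 : ℂ) + 1) * (θ : ℂ))) * a k.succ +
              Complex.exp (Complex.I * ((k.1 : ℂ) + 1) * (θ : ℂ)) * b k)) =
      Complex.exp (Complex.I * ((j.1 : ℤ) : ℂ) * (θ : ℂ)) * a 0 +
        ∑ k : Fin m,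
          (Complex.exp (Complex.I * (((j.1 : ℤ) - (k.1 + 1) : ℤ) : ℂ) * (θ : ℂ)) * a k.succ +
            Complex.exp (Complex.I * (((j.1 : ℤ) + (k.1 + 1) : ℤ) : ℂ) * (θ : ℂ)) * b k) := by
    intro θ
    rw [mul_add, Finset.mul_sum]
    refine congrArg₂ (· + ·) (by push_cast; ring) ?_
    refine Finset.sum_congr rfl fun k _ => ?_
    have h1 : Complex.exp (Complex.I * (j.1 : ℂ) * (θ : ℂ)) *
        Complex.exp (-(Complex.I * ((k.1 : ℂ) + 1) * (θ : ℂ))) =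
        Complex.exp (Complex.I * (((j.1 : ℤ) - (k.1 + 1) : ℤ) : ℂ) * (θ : ℂ)) := by
      rw [← Complex.exp_add]; congr 1; push_cast; ring
    have h2 : Complex.exp (Complex.I * (j.1 : ℂ) * (θ : ℂ)) *
        Complex.exp (Complex.I * ((k.1 : ℂ) + 1) * (θ : ℂ)) =
        Complex.exp (Complex.I * (((j.1 : ℤ) + (k.1 + 1) : ℤ) : ℂ) * (θ : ℂ)) := by
      rw [← Complex.exp_add]; congr 1; push_cast; ring
    rw [mul_add, ← mul_assoc, h1, ← mul_assoc, h2]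
  rw [intervalIntegral.integral_congr (fun θ _ => hrw θ)]
  have hc : ∀ (c : ℤ) (z : ℂ),
      Continuous (fun θ : ℝ => Complex.exp (Complex.I * (c : ℂ) * (θ : ℂ)) * z) := by
    intro c z; fun_prop
  have h1 : IntervalIntegrable
      (fun θ : ℝ => Complex.exp (Complex.I * ((j.1 : ℤ) : ℂ) * (θ : ℂ)) * a 0)
      MeasureTheory.volume (-Real.pi) Real.pi := (hc _ _).intervalIntegrable _ _
  have h2 : IntervalIntegrable
      (fun θ : ℝ => ∑ k : Fin m,
        (Complex.exp (Complex.I * (((j.1 : ℤ) - (k.1 + 1) : ℤ) : ℂ) * (θ : ℂ)) * a k.succ +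
          Complex.exp (Complex.I * (((j.1 : ℤ) + (k.1 + 1) : ℤ) : ℂ) * (θ : ℂ)) * b k))
      MeasureTheory.volume (-Real.pi) Real.pi := by
    apply Continuous.intervalIntegrable
    exact continuous_finset_sum _ fun k _ => ((hc _ _).add (hc _ _))
  have h3 : ∀ k ∈ (Finset.univ : Finset (Fin m)), IntervalIntegrable
      (fun θ : ℝ =>
        Complex.exp (Complex.I * (((j.1 : ℤ) - (k.1 + 1) : ℤ) : ℂ) * (θ : ℂ)) * a k.succ +
          Complex.exp (Complex.I * (((j.1 : ℤ) + (k.1 + 1) : ℤ) : ℂ) * (θ : ℂ)) * b k)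
      MeasureTheory.volume (-Real.pi) Real.pi :=
    fun k _ => ((hc _ _).add (hc _ _)).intervalIntegrable _ _
  rw [intervalIntegral.integral_add h1 h2, intervalIntegral.integral_finset_sum h3,
      integral_exp_int_mul]
  have hterm : ∀ k : Fin m,
      (∫ θ : ℝ in (-Real.pi)..Real.pi,
        (Complex.exp (Complex.I * (((j.1 : ℤ) - (k.1 + 1) : ℤ) : ℂ) * (θ : ℂ)) * a k.succ +
          Complex.exp (Complex.I * (((j.1 : ℤ) + (k.1 + 1) : ℤ) : ℂ) * (θ : ℂ)) * b k)) =
      (if ((j.1 : ℤ) - (k.1 + 1) : ℤ) = 0 then (2 * Real.pi : ℂ) else 0) * a k.succ +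
        (if ((j.1 : ℤ) + (k.1 + 1) : ℤ) = 0 then (2 * Real.pi : ℂ) else 0) * b k := by
    intro k
    rw [intervalIntegral.integral_add ((hc _ _).intervalIntegrable _ _)
        ((hc _ _).intervalIntegrable _ _), integral_exp_int_mul, integral_exp_int_mul]
  rw [Finset.sum_congr rfl fun k _ => hterm k]
  rcases Fin.eq_zero_or_eq_succ j with rfl | ⟨t, rfl⟩
  · have hsum : (∑ k : Fin m,
        ((if (((0 : Fin (m+1)).1 : ℤ) - (k.1 + 1) : ℤ) = 0 then (2 * Real.pi : ℂ) else 0) * a k.succ +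
          (if (((0 : Fin (m+1)).1 : ℤ) + (k.1 + 1) : ℤ) = 0 then (2 * Real.pi : ℂ) else 0) * b k)) = 0 := by
      apply Finset.sum_eq_zero
      intro k _
      rw [if_neg (by push_cast [Fin.val_zero]; omega), if_neg (by push_cast [Fin.val_zero]; omega),
        zero_mul, zero_mul, add_zero]
    rw [hsum, add_zero, if_pos (by push_cast [Fin.val_zero]; try ring)]
  · rw [if_neg (by push_cast [Fin.val_succ]; omega), zero_mul, zero_add]
    rw [Finset.sum_eq_single t]
    · rw [if_pos (by push_cast [Fin.val_succ]; try ring), if_neg (by push_cast [Fin.val_succ]; omega),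
        zero_mul, add_zero]
    · intro k _ hk
      have hkt : (k.1 : ℤ) ≠ (t.1 : ℤ) := by
        exact_mod_cast fun h => hk (Fin.ext (by exact_mod_cast h))
      rw [if_neg (by push_cast [Fin.val_succ]; omega), if_neg (by push_cast [Fin.val_succ]; omega),
        zero_mul, zero_mul, add_zero]
    · exact fun h => absurd (Finset.mem_univ t) h

lemma quad_re_nonneg {n : ℕ} {M : Matrix (Fin n) (Fin n) ℂ} (hM : M.PosSemidef)
    (w : EuclideanSpace ℂ (Fin n)) :
    0 ≤ (inner ℂ w (Matrix.toEuclideanCLM (𝕜 := ℂ) M w) : ℂ).re := by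
  rw [EuclideanSpace.inner_eq_star_dotProduct, Matrix.ofLp_toEuclideanCLM,
    dotProduct_comm]
  exact hM.re_dotProduct_nonneg _

lemma quad_le_opNorm {n : ℕ} (M : Matrix (Fin n) (Fin n) ℂ) (w : EuclideanSpace ℂ (Fin n)) :
    (inner ℂ w (Matrix.toEuclideanCLM (𝕜 := ℂ) M w) : ℂ).re ≤ l2OpNorm n M * ‖w‖ ^ 2 := by
  have h1 : (inner ℂ w (Matrix.toEuclideanCLM (𝕜 := ℂ) M w) : ℂ).re ≤
      ‖(inner ℂ w (Matrix.toEuclideanCLM (𝕜 := ℂ) M w) : ℂ)‖ := Complex.re_le_norm _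
  refine h1.trans ?_
  calc ‖(inner ℂ w (Matrix.toEuclideanCLM (𝕜 := ℂ) M w) : ℂ)‖
      ≤ ‖w‖ * ‖Matrix.toEuclideanCLM (𝕜 := ℂ) M w‖ := norm_inner_le_norm _ _
    _ ≤ ‖w‖ * (l2OpNorm n M * ‖w‖) := by
        gcongr
        exact ContinuousLinearMap.le_opNorm _ _
    _ = l2OpNorm n M * ‖w‖ ^ 2 := by ring

lemma inner_psd_bound {n : ℕ} {A B : Matrix (Fin n) (Fin n) ℂ}
    (hA : A.PosSemidef) (hBA : (B - A).PosSemidef) (u v : EuclideanSpace ℂ (Fin n)) :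
    ‖(inner ℂ u (Matrix.toEuclideanCLM (𝕜 := ℂ) A v) : ℂ)‖ ≤ l2OpNorm n B * ‖u‖ * ‖v‖ := by
  obtain ⟨C, hC⟩ : ∃ C : Matrix (Fin n) (Fin n) ℂ, A = Cᴴ * C := by
    open scoped MatrixOrder in exact CStarAlgebra.nonneg_iff_eq_star_mul_self.mp hA.nonneg
  have hquad : ∀ w : EuclideanSpace ℂ (Fin n),
      (inner ℂ w (Matrix.toEuclideanCLM (𝕜 := ℂ) A w) : ℂ).re ≤ l2OpNorm n B * ‖w‖ ^ 2 := by
    intro w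
    have hd : (inner ℂ w (Matrix.toEuclideanCLM (𝕜 := ℂ) (B - A) w) : ℂ).re =
        (inner ℂ w (Matrix.toEuclideanCLM (𝕜 := ℂ) B w) : ℂ).re -
          (inner ℂ w (Matrix.toEuclideanCLM (𝕜 := ℂ) A w) : ℂ).re := by
      rw [map_sub, ContinuousLinearMap.sub_apply, inner_sub_right]
      simp
    have h0 := quad_re_nonneg hBA w
    have h2 := quad_le_opNorm (n := n) B w
    rw [hd] at h0
    linarith
  have hTA : ∀ x y : EuclideanSpace ℂ (Fin n),
      (inner ℂ x (Matrix.toEuclideanCLM (𝕜 := ℂ) A y) : ℂ) =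
        inner ℂ (Matrix.toEuclideanCLM (𝕜 := ℂ) C x) (Matrix.toEuclideanCLM (𝕜 := ℂ) C y) := by
    intro x y
    have hm : Matrix.toEuclideanCLM (𝕜 := ℂ) A =
        star (Matrix.toEuclideanCLM (𝕜 := ℂ) C) * Matrix.toEuclideanCLM (𝕜 := ℂ) C := by
      rw [hC, ← Matrix.star_eq_conjTranspose, _root_.map_mul, map_star]
    rw [hm, ContinuousLinearMap.mul_apply, ContinuousLinearMap.star_eq_adjoint,
      ContinuousLinearMap.adjoint_inner_right]
  have hCu : ∀ w : EuclideanSpace ℂ (Fin n),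
      ‖Matrix.toEuclideanCLM (𝕜 := ℂ) C w‖ ≤ Real.sqrt (l2OpNorm n B) * ‖w‖ := by
    intro w
    have h1 : ‖Matrix.toEuclideanCLM (𝕜 := ℂ) C w‖ ^ 2 =
        (inner ℂ w (Matrix.toEuclideanCLM (𝕜 := ℂ) A w) : ℂ).re := by
      rw [hTA w w, inner_self_eq_norm_sq_to_K (𝕜 := ℂ)]
      simp [← Complex.ofReal_pow]
    have h2 : ‖Matrix.toEuclideanCLM (𝕜 := ℂ) C w‖ ^ 2 ≤ l2OpNorm n B * ‖w‖ ^ 2 :=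
      h1 ▸ hquad w
    have h3 := Real.sqrt_le_sqrt h2
    rwa [Real.sqrt_sq (norm_nonneg _), Real.sqrt_mul (show (0:ℝ) ≤ l2OpNorm n B from norm_nonneg _) (‖w‖ ^ 2), Real.sqrt_sq (norm_nonneg _)]
      at h3
  calc ‖(inner ℂ u (Matrix.toEuclideanCLM (𝕜 := ℂ) A v) : ℂ)‖
      = ‖(inner ℂ (Matrix.toEuclideanCLM (𝕜 := ℂ) C u) (Matrix.toEuclideanCLM (𝕜 := ℂ) C v) : ℂ)‖ := by
        rw [hTA]
    _ ≤ ‖Matrix.toEuclideanCLM (𝕜 := ℂ) C u‖ * ‖Matrix.toEuclideanCLM (𝕜 := ℂ) C v‖ :=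
        norm_inner_le_norm _ _
    _ ≤ (Real.sqrt (l2OpNorm n B) * ‖u‖) * (Real.sqrt (l2OpNorm n B) * ‖v‖) :=
        mul_le_mul (hCu u) (hCu v) (norm_nonneg _) (by positivity)
    _ = (Real.sqrt (l2OpNorm n B) * Real.sqrt (l2OpNorm n B)) * ‖u‖ * ‖v‖ := by ring
    _ = l2OpNorm n B * ‖u‖ * ‖v‖ := by
        rw [Real.mul_self_sqrt (show (0:ℝ) ≤ l2OpNorm n B from norm_nonneg _)]

lemma opNorm_le_of_inner {n : ℕ} (A : Matrix (Fin n) (Fin n) ℂ) (S : ℝ) (hS : 0 ≤ S)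
    (h : ∀ u v : EuclideanSpace ℂ (Fin n),
      ‖(inner ℂ u (Matrix.toEuclideanCLM (𝕜 := ℂ) A v) : ℂ)‖ ≤ S * ‖u‖ * ‖v‖) :
    l2OpNorm n A ≤ S := by
  refine ContinuousLinearMap.opNorm_le_bound _ hS fun v => ?_
  set T := Matrix.toEuclideanCLM (𝕜 := ℂ) A with hT
  rcases eq_or_lt_of_le (norm_nonneg (T v)) with h0 | h0
  · rw [← h0]; positivity
  · have h1 := h (T v) v
    rw [inner_self_eq_norm_sq_to_K (𝕜 := ℂ) (x := T v), norm_pow, RCLike.norm_ofReal,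
      abs_norm] at h1
    nlinarith [h1, h0]

lemma psi_clm_expand (n m : ℕ) (Q : Fin (m + 1) → Matrix (Fin n) (Fin n) ℝ) (θ : ℝ) :
    Matrix.toEuclideanCLM (𝕜 := ℂ) (psiOf n m Q θ) =
      Matrix.toEuclideanCLM (𝕜 := ℂ) ((Q 0).map Complex.ofReal) +
        ∑ k : Fin m,
          (Complex.exp (-(Complex.I * ((k.1 : ℂ) + 1) * (θ : ℂ))) •
              Matrix.toEuclideanCLM (𝕜 := ℂ) ((Q k.succ).map Complex.ofReal) +
            Complex.exp (Complex.I * ((k.1 : ℂ) + 1) * (θ : ℂ)) •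
              Matrix.toEuclideanCLM (𝕜 := ℂ) (((Q k.succ)ᵀ).map Complex.ofReal)) := by
  unfold psiOf
  rw [map_add, map_sum]
  congr 1
  refine Finset.sum_congr rfl fun k _ => ?_
  rw [map_add, _root_.map_smul, _root_.map_smul]

lemma psi_inner_expand (n m : ℕ) (Q : Fin (m + 1) → Matrix (Fin n) (Fin n) ℝ) (θ : ℝ)
    (u v : EuclideanSpace ℂ (Fin n)) :
    (inner ℂ u (Matrix.toEuclideanCLM (𝕜 := ℂ) (psiOf n m Q θ) v) : ℂ) =
      (inner ℂ u (Matrix.toEuclideanCLM (𝕜 := ℂ) ((Q 0).map Complex.ofReal) v) : ℂ) +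
        ∑ k : Fin m,
          (Complex.exp (-(Complex.I * ((k.1 : ℂ) + 1) * (θ : ℂ))) *
              (inner ℂ u (Matrix.toEuclideanCLM (𝕜 := ℂ) ((Q k.succ).map Complex.ofReal) v) : ℂ) +
            Complex.exp (Complex.I * ((k.1 : ℂ) + 1) * (θ : ℂ)) *
              (inner ℂ u (Matrix.toEuclideanCLM (𝕜 := ℂ) (((Q k.succ)ᵀ).map Complex.ofReal) v) : ℂ)) := by
  rw [psi_clm_expand, ContinuousLinearMap.add_apply, ContinuousLinearMap.sum_apply,
    inner_add_right, inner_sum]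
  congr 1
  refine Finset.sum_congr rfl fun k _ => ?_
  rw [ContinuousLinearMap.add_apply, ContinuousLinearMap.smul_apply,
    ContinuousLinearMap.smul_apply, inner_add_right, inner_smul_right, inner_smul_right]

theorem coefficient_opNorm_bound
    (n m : ℕ) (hn : 0 < n) (hm : 0 < m)
    (R Q : Fin (m + 1) → Matrix (Fin n) (Fin n) ℝ)
    (hR0 : (R 0).IsSymm) (hQ0 : (Q 0).IsSymm)
    (Ψx Ψ : ℝ → Matrix (Fin n) (Fin n) ℂ)
    (hΨx : ∀ θ : ℝ, Ψx θ = psiOf n m R θ)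
    (hΨ : ∀ θ : ℝ, Ψ θ = psiOf n m Q θ)
    (hpsd : ∀ θ : ℝ, (Ψ θ).PosSemidef ∧ (Ψx θ - Ψ θ).PosSemidef) :
    ∀ k : Fin (m + 1),
      l2OpNorm n ((Q k).map Complex.ofReal) ≤
        ⨆ θ ∈ Set.Icc (-Real.pi) Real.pi, l2OpNorm n (Ψx θ) := by
  intro j
  have hpi : (0:ℝ) < Real.pi := Real.pi_pos
  set K : Set ℝ := Set.Icc (-Real.pi) Real.pi with hK
  set g : ℝ → ℝ := fun θ => l2OpNorm n (Ψx θ) with hg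
  -- continuity of g
  have hgc : Continuous g := by
    have hfun : g = fun θ : ℝ => ‖Matrix.toEuclideanCLM (𝕜 := ℂ) ((R 0).map Complex.ofReal) +
        ∑ k : Fin m,
          (Complex.exp (-(Complex.I * ((k.1 : ℂ) + 1) * (θ : ℂ))) •
              Matrix.toEuclideanCLM (𝕜 := ℂ) ((R k.succ).map Complex.ofReal) +
            Complex.exp (Complex.I * ((k.1 : ℂ) + 1) * (θ : ℂ)) •
              Matrix.toEuclideanCLM (𝕜 := ℂ) (((R k.succ)ᵀ).map Complex.ofReal))‖ := by
      funext θ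
      rw [hg]
      show l2OpNorm n (Ψx θ) = _
      rw [hΨx θ]
      unfold l2OpNorm
      rw [psi_clm_expand]
    rw [hfun]
    refine Continuous.norm ?_
    refine Continuous.add continuous_const (continuous_finset_sum _ fun k _ => ?_)
    exact ((Complex.continuous_exp.comp (by fun_prop)).smul continuous_const).add
      ((Complex.continuous_exp.comp (by fun_prop)).smul continuous_const)
  have hKne : K.Nonempty := Set.nonempty_Icc.mpr (by linarith)
  have hbdd : BddAbove (g '' K) :=
    (isCompact_Icc.image_of_continuousOn hgc.continuousOn).bddAbove
  set S : ℝ := sSup (g '' K) with hS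
  have hSmem : ∀ θ ∈ K, g θ ≤ S := fun θ hθ => le_csSup hbdd ⟨θ, hθ, rfl⟩
  have hS0 : 0 ≤ S := le_trans (norm_nonneg _) (hSmem 0 (by constructor <;> linarith))
  have key : l2OpNorm n ((Q j).map Complex.ofReal) ≤ S := by
    apply opNorm_le_of_inner _ S hS0
    intro u v
    set a : Fin (m + 1) → ℂ := fun k =>
      (inner ℂ u (Matrix.toEuclideanCLM (𝕜 := ℂ) ((Q k).map Complex.ofReal) v) : ℂ) with ha
    set b : Fin m → ℂ := fun k =>
      (inner ℂ u (Matrix.toEuclideanCLM (𝕜 := ℂ) (((Q k.succ)ᵀ).map Complex.ofReal) v) : ℂ) with hb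
    have hinner : ∀ θ : ℝ, (inner ℂ u (Matrix.toEuclideanCLM (𝕜 := ℂ) (Ψ θ) v) : ℂ) =
        a 0 + ∑ k : Fin m,
          (Complex.exp (-(Complex.I * ((k.1 : ℂ) + 1) * (θ : ℂ))) * a k.succ +
            Complex.exp (Complex.I * ((k.1 : ℂ) + 1) * (θ : ℂ)) * b k) := by
      intro θ
      rw [hΨ θ, psi_inner_expand]
    have hIeq : (∫ θ : ℝ in (-Real.pi)..Real.pi,
        Complex.exp (Complex.I * (j.1 : ℂ) * (θ : ℂ)) *
          (inner ℂ u (Matrix.toEuclideanCLM (𝕜 := ℂ) (Ψ θ) v) : ℂ)) =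
        (2 * Real.pi : ℂ) * a j := by
      rw [← fourier_pick m a b j]
      apply intervalIntegral.integral_congr
      intro θ _
      dsimp only
      rw [hinner θ]
    have hbound : ‖(∫ θ : ℝ in (-Real.pi)..Real.pi,
        Complex.exp (Complex.I * (j.1 : ℂ) * (θ : ℂ)) *
          (inner ℂ u (Matrix.toEuclideanCLM (𝕜 := ℂ) (Ψ θ) v) : ℂ))‖ ≤
        (S * ‖u‖ * ‖v‖) * |Real.pi - (-Real.pi)| := by
      apply intervalIntegral.norm_integral_le_of_norm_le_const
      intro θ hθ
      have hθK : θ ∈ K := by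
        rw [Set.uIoc_of_le (by linarith)] at hθ
        exact Set.mem_Icc_of_Ioc hθ
      rw [norm_mul]
      have he : ‖Complex.exp (Complex.I * (j.1 : ℂ) * (θ : ℂ))‖ = 1 := by
        rw [Complex.norm_exp]
        simp [Complex.mul_re, Complex.mul_im]
      rw [he, one_mul]
      calc ‖(inner ℂ u (Matrix.toEuclideanCLM (𝕜 := ℂ) (Ψ θ) v) : ℂ)‖
          ≤ l2OpNorm n (Ψx θ) * ‖u‖ * ‖v‖ :=
            inner_psd_bound (hpsd θ).1 (hpsd θ).2 u v
        _ ≤ S * ‖u‖ * ‖v‖ := by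
            have := hSmem θ hθK
            gcongr
    rw [hIeq] at hbound
    have habs : |Real.pi - (-Real.pi)| = 2 * Real.pi := by
      rw [abs_of_pos (by linarith)]; ring
    have hnorm2 : ‖(2 * Real.pi : ℂ) * a j‖ = (2 * Real.pi) * ‖a j‖ := by
      rw [norm_mul]
      congr 1
      have : ((2 * Real.pi : ℝ) : ℂ) = (2 * Real.pi : ℂ) := by push_cast; ring
      rw [← this, Complex.norm_real, Real.norm_eq_abs, abs_of_pos (by linarith)]
    rw [habs, hnorm2] at hbound
    have h2pi : (0:ℝ) < 2 * Real.pi := by linarith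
    nlinarith [hbound]
  refine le_trans key (csSup_le (hKne.image g) ?_)
  rintro y ⟨θ, hθ, rfl⟩
  have hbdd2 : BddAbove (Set.range fun θ => ⨆ _ : θ ∈ K, g θ) := by
    refine ⟨max S 0, ?_⟩
    rintro y ⟨θ', rfl⟩
    dsimp only
    by_cases hθ' : θ' ∈ K
    · rw [ciSup_pos hθ']
      exact le_max_of_le_left (hSmem θ' hθ')
    · haveI : IsEmpty (θ' ∈ K) := ⟨hθ'⟩
      rw [Real.iSup_of_isEmpty]
      exact le_max_right _ _
  calc g θ = ⨆ _ : θ ∈ K, g θ := (ciSup_pos (f := fun _ => g θ) hθ).symm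
    _ ≤ ⨆ θ' : ℝ, ⨆ _ : θ' ∈ K, g θ' := le_ciSup hbdd2 θ
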